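/- For every n ∈ ℕ, φ(V_n) = V_n; consequently φ : V → V is a bijection. -/

import Mathlib

noncomputable section
namespace SqPaper

/-- The two letters: `0 ↦ A`, `1 ↦ B`. -/
abbrev Ltr := Fin 2
def lA : Ltr := 0
def lB : Ltr := 1

/-- The pairing `⟨ , ⟩` on letters: `⟨A,A⟩=⟨B,B⟩=2`, `⟨A,B⟩=⟨B,A⟩=-2`. -/
def brk (x y : Ltr) : ℤ := if x = y then 2 else -2

variable (F : Type*) [Field F]

/-- The free algebra `V` on the two generators, realized as the monoid algebra of the
free monoid on two letters; the words form the standard basis. -/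
abbrev FA := MonoidAlgebra F (FreeMonoid Ltr)

/-- The standard basis vector attached to a word (list of letters). -/
def wd (l : List Ltr) : FA F := MonoidAlgebra.single (FreeMonoid.ofList l) 1

def Agen : FA F := wd F [lA]
def Bgen : FA F := wd F [lB]

/-- View an element of `V` as a finitely supported function on words. -/
def fsp (v : FA F) : FreeMonoid Ltr →₀ F := v.coeff

/-- The symmetric bilinear form on `V` for which the standard basis of words is orthonormal. -/
def form (u v : FA F) : F := (fsp F u).sum fun w c => c * (fsp F v) w

/-- Extend a function on words to an `F`-linear map on `V`. -/
def mkMap {M : Type*} [AddCommMonoid M] [Module F M] (f : List Ltr → M) :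
    FA F →ₗ[F] M :=
  Finsupp.lsum F (fun w => LinearMap.toSpanSingleton F M (f (FreeMonoid.toList w))) ∘ₗ
    (MonoidAlgebra.coeffLinearEquiv F).toLinearMap

/-- `[3]_q = (q³ - q⁻³)/(q - q⁻¹)`. -/
def tri (q : F) : F := (q ^ 3 - q⁻¹ ^ 3) / (q - q⁻¹)

/-- The q-shuffle product on words. -/
def shufW (q : F) : List Ltr → List Ltr → FA F
  | [], v => wd F v
  | u, [] => wd F u
  | a :: u, b :: v =>
      wd F [a] * shufW q u (b :: v) +
        (q ^ (((a :: u).map (fun x => brk x b)).sum)) • (wd F [b] * shufW q (a :: u) v)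
  termination_by u v => u.length + v.length

/-- The q-shuffle product `⋆` on `V`, as a bilinear map. -/
def qshuf (q : F) : FA F →ₗ[F] FA F →ₗ[F] FA F :=
  mkMap F fun u => mkMap F fun v => shufW F q u v

/-- Iterated `⋆`-product of the letters of a word. -/
def thetaW (q : F) : List Ltr → FA F
  | [] => 1
  | a :: t => qshuf F q (wd F [a]) (thetaW q t)

/-- `θ : V → V`, the algebra homomorphism from the free algebra to the q-shuffle algebra
with `θ(A) = A`, `θ(B) = B`. -/
def theta (q : F) : FA F →ₗ[F] FA F := mkMap F fun l => thetaW F q l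

/-- `A_L`, left multiplication by `A` in the free algebra. -/
def AL : FA F →ₗ[F] FA F := LinearMap.mulLeft F (Agen F)
def BL : FA F →ₗ[F] FA F := LinearMap.mulLeft F (Bgen F)
def AR : FA F →ₗ[F] FA F := LinearMap.mulRight F (Agen F)
def BR : FA F →ₗ[F] FA F := LinearMap.mulRight F (Bgen F)

/-- `X*_L` (for the letter `x`): deletes the letter `x` from the front of a word. -/
def delL (x : Ltr) : FA F →ₗ[F] FA F :=
  mkMap F fun l => if l.head? = some x then wd F l.tail else 0

/-- `X*_R` (for the letter `x`): deletes the letter `x` from the end of a word. -/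
def delR (x : Ltr) : FA F →ₗ[F] FA F :=
  mkMap F fun l => if l.getLast? = some x then wd F l.dropLast else 0

/-- `X_ℓ`: left q-shuffle multiplication by the letter `x`. -/
def shL (q : F) (x : Ltr) : FA F →ₗ[F] FA F := qshuf F q (wd F [x])

/-- `X_r`: right q-shuffle multiplication by the letter `x`. -/
def shR (q : F) (x : Ltr) : FA F →ₗ[F] FA F := (qshuf F q).flip (wd F [x])

/-- `X*_ℓ`: the weighted deletion map, deleting an occurrence of the letter `x`
with weight `q^{⟨v₁,x⟩+⋯+⟨v_{i-1},x⟩}`. -/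
def lowL (q : F) (x : Ltr) : FA F →ₗ[F] FA F :=
  mkMap F fun l =>
    ∑ i ∈ Finset.range l.length,
      if l[i]? = some x then
        (q ^ (((l.take i).map (fun y => brk y x)).sum)) • wd F (l.eraseIdx i)
      else 0

/-- `X*_r`: the weighted deletion map, deleting an occurrence of the letter `x`
with weight `q^{⟨vₙ,x⟩+⋯+⟨v_{i+1},x⟩}`. -/
def lowR (q : F) (x : Ltr) : FA F →ₗ[F] FA F :=
  mkMap F fun l =>
    ∑ i ∈ Finset.range l.length,
      if l[i]? = some x then
        (q ^ (((l.drop (i + 1)).map (fun y => brk y x)).sum)) • wd F (l.eraseIdx i)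
      else 0

/-- `K`, the algebra automorphism of the free algebra `V` with `K(A) = q²A`, `K(B) = q⁻²B`;
on a word `v = v₁⋯vₙ` it acts as `K(v) = v·q^{⟨v₁,A⟩+⋯+⟨vₙ,A⟩}`. -/
def Kop (q : F) : FA F →ₗ[F] FA F :=
  mkMap F fun l => (q ^ ((l.map (fun y => brk y lA)).sum)) • wd F l

/-- `K⁻¹`; on a word `v = v₁⋯vₙ` it acts as `K⁻¹(v) = v·q^{⟨v₁,B⟩+⋯+⟨vₙ,B⟩}`. -/
def Kinv (q : F) : FA F →ₗ[F] FA F :=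
  mkMap F fun l => (q ^ ((l.map (fun y => brk y lB)).sum)) • wd F l

/-- `T`, the automorphism of the free algebra swapping `A` and `B`. -/
def Top : FA F →ₗ[F] FA F :=
  mkMap F fun l => wd F (l.map (fun x => if x = lA then lB else lA))

/-- `Â = Q(A_L − K B_R)` and `B̂ = Q(B_L − K⁻¹ A_R)` where `Q = 1 - q²`. -/
def hatOp (q : F) (a : Ltr) : FA F →ₗ[F] FA F :=
  if a = lA then (1 - q ^ 2) • (AL F - Kop F q ∘ₗ BR F)
  else (1 - q ^ 2) • (BL F - Kinv F q ∘ₗ AR F)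

def phiW (q : F) : List Ltr → FA F
  | [] => 1
  | a :: t => hatOp F q a (phiW q t)

/-- The map `φ`: `φ(1) = 1` and `φ(v₁⋯vₙ) = v̂₁v̂₂⋯v̂ₙ(1)`. -/
def phi (q : F) : FA F →ₗ[F] FA F := mkMap F fun l => phiW F q l

/-- `ψ = K B_R A*_L + K⁻¹ A_R B*_L`. -/
def psi (q : F) : FA F →ₗ[F] FA F :=
  Kop F q ∘ₗ BR F ∘ₗ delL F lA + Kinv F q ∘ₗ AR F ∘ₗ delL F lB

/-- `V_n`, the span of the words of length `n`. -/
def Vn (n : ℕ) : Submodule F (FA F) :=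
  Submodule.span F { x | ∃ l : List Ltr, l.length = n ∧ x = wd F l }

/-- `J⁺ = A³B − [3]_q A²BA + [3]_q ABA² − BA³`. -/
def Jp (q : F) : FA F :=
  Agen F ^ 3 * Bgen F - tri F q • (Agen F ^ 2 * Bgen F * Agen F)
    + tri F q • (Agen F * Bgen F * Agen F ^ 2) - Bgen F * Agen F ^ 3

/-- `J⁻ = B³A − [3]_q B²AB + [3]_q BAB² − AB³`. -/
def Jm (q : F) : FA F :=
  Bgen F ^ 3 * Agen F - tri F q • (Bgen F ^ 2 * Agen F * Bgen F)
    + tri F q • (Bgen F * Agen F * Bgen F ^ 2) - Agen F * Bgen F ^ 3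

/-- `J`, the two-sided ideal of the free algebra generated by `J⁺` and `J⁻`
(realized as the `F`-span of the elements `a·J^±·b`). -/
def Jsub (q : F) : Submodule F (FA F) :=
  Submodule.span F { x | ∃ a b : FA F, x = a * Jp F q * b ∨ x = a * Jm F q * b }

/-- `U`, the subalgebra of the q-shuffle algebra `(V,⋆)` generated by `A` and `B`,
realized as the span of all `⋆`-products of the letters. -/
def Usub (q : F) : Submodule F (FA F) :=
  Submodule.span F (Set.range fun l : List Ltr => thetaW F q l)

/-- A `□_q`-module structure on an `F`-vector space `M`: four operators
`x₀, x₁, x₂, x₃` (indices mod 4) satisfying the q-Weyl and q-Serre relations. -/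
structure SqAct (q : F) (M : Type*) [AddCommGroup M] [Module F M] where
  x : ZMod 4 → Module.End F M
  weyl : ∀ i : ZMod 4,
    q • (x i * x (i + 1)) - q⁻¹ • (x (i + 1) * x i) = (q - q⁻¹) • (1 : Module.End F M)
  serre : ∀ i : ZMod 4,
    x i ^ 3 * x (i + 2) - tri F q • (x i ^ 2 * x (i + 2) * x i)
      + tri F q • (x i * x (i + 2) * x i ^ 2) - x (i + 2) * x i ^ 3 = 0

variable {F} {q : F} {M : Type*} [AddCommGroup M] [Module F M]

/-- A `□_q`-module `M` is generated by `ξ` if no proper submodule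
(subspace invariant under all the `xᵢ`) contains `ξ`. -/
def SqAct.Gen (S : SqAct F q M) (ξ : M) : Prop :=
  ∀ W : Submodule F M, (∀ i : ZMod 4, ∀ m ∈ W, S.x i m ∈ W) → ξ ∈ W → W = ⊤

/-- `W_n`: the span of the vectors `u₁u₂⋯uₙ·ξ` with each `uᵢ ∈ {x₀, x₂}`. -/
def SqAct.Wn (S : SqAct F q M) (ξ : M) (n : ℕ) : Submodule F M :=
  Submodule.span F
    { m | ∃ l : List (ZMod 4), l.length = n ∧ (∀ i ∈ l, i = 0 ∨ i = 2) ∧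
        m = l.foldr (fun i acc => S.x i acc) ξ }

section PhiBijectiveProof

variable {F : Type*} [Field F]

theorem mkMap_wd {M : Type*} [AddCommMonoid M] [Module F M] (f : List Ltr → M) (l : List Ltr) :
    mkMap F f (wd F l) = f l := by
  rw [mkMap, wd, LinearMap.comp_apply]
  simp [MonoidAlgebra.coeffLinearEquiv_apply, MonoidAlgebra.coeff_single,
    LinearMap.toSpanSingleton_apply]

theorem single_eq_smul_wd (a : FreeMonoid Ltr) (b : F) :
    (MonoidAlgebra.single a b : FA F) = b • wd F (FreeMonoid.toList a) := by
  simp [wd, MonoidAlgebra.smul_single']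

theorem lmap_ext {M : Type*} [AddCommMonoid M] [Module F M] {f g : FA F →ₗ[F] M}
    (h : ∀ l, f (wd F l) = g (wd F l)) : f = g := by
  refine MonoidAlgebra.lhom_ext' fun a => LinearMap.ext fun b => ?_
  rw [LinearMap.comp_apply, LinearMap.comp_apply, MonoidAlgebra.lsingle_apply,
    single_eq_smul_wd, map_smul, map_smul]
  exact congrArg (fun x => b • x) (h _)

theorem wd_mul (l m : List Ltr) : wd F l * wd F m = wd F (l ++ m) := by
  rw [wd, wd, MonoidAlgebra.single_mul_single]
  simp [wd]

/-- swap of a letter -/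
def sw (x : Ltr) : Ltr := if x = lA then lB else lA

theorem ltr_cases (a : Ltr) : a = lA ∨ a = lB := by revert a; decide
@[simp] theorem lA_ne_lB : lA ≠ lB := by decide
@[simp] theorem lB_ne_lA : lB ≠ lA := by decide
@[simp] theorem sw_lA : sw lA = lB := by decide
@[simp] theorem sw_lB : sw lB = lA := by decide
@[simp] theorem sw_sw (a : Ltr) : sw (sw a) = a := by revert a; decide
theorem brk_comm (x y : Ltr) : brk x y = brk y x := by revert x y; decide
theorem brk_sw (y a : Ltr) : brk y (sw a) = - brk y a := by revert y a; decide
theorem brk_sw_self (a : Ltr) : brk (sw a) a = -2 := by revert a; decide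
theorem brk_self (a : Ltr) : brk a a = 2 := by revert a; decide

/- operator values on words -/
theorem AL_wd (l : List Ltr) : AL F (wd F l) = wd F (lA :: l) := by
  rw [AL, LinearMap.mulLeft_apply, Agen, wd_mul]; rfl
theorem BL_wd (l : List Ltr) : BL F (wd F l) = wd F (lB :: l) := by
  rw [BL, LinearMap.mulLeft_apply, Bgen, wd_mul]; rfl
theorem AR_wd (l : List Ltr) : AR F (wd F l) = wd F (l ++ [lA]) := by
  rw [AR, LinearMap.mulRight_apply, Agen, wd_mul]
theorem BR_wd (l : List Ltr) : BR F (wd F l) = wd F (l ++ [lB]) := by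
  rw [BR, LinearMap.mulRight_apply, Bgen, wd_mul]

theorem delL_wd (x : Ltr) (l : List Ltr) :
    delL F x (wd F l) = if l.head? = some x then wd F l.tail else 0 := mkMap_wd _ l

theorem Kop_wd (q : F) (l : List Ltr) :
    Kop F q (wd F l) = (q ^ ((l.map (fun y => brk y lA)).sum)) • wd F l := mkMap_wd _ l
theorem Kinv_wd (q : F) (l : List Ltr) :
    Kinv F q (wd F l) = (q ^ ((l.map (fun y => brk y lB)).sum)) • wd F l := mkMap_wd _ l

theorem phi_wd (q : F) (l : List Ltr) : phi F q (wd F l) = phiW F q l := mkMap_wd _ l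

/- step data for ψ -/
def stepW : List Ltr → List Ltr
  | [] => []
  | a :: t => t ++ [sw a]

def stepE : List Ltr → ℤ
  | [] => 0
  | a :: t => ((t ++ [sw a]).map (fun y => brk y a)).sum

@[simp] theorem stepW_length (l : List Ltr) : (stepW l).length = l.length := by
  cases l <;> simp [stepW]

theorem psi_wd (q : F) (a : Ltr) (t : List Ltr) :
    psi F q (wd F (a :: t)) = (q ^ stepE (a :: t)) • wd F (stepW (a :: t)) := by
  rcases ltr_cases a with rfl | rfl <;>
    simp [psi, delL_wd, BR_wd, AR_wd, Kop_wd, Kinv_wd, stepE, stepW]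

theorem psi_wd_nil (q : F) : psi F q (wd F ([] : List Ltr)) = 0 := by
  simp [psi, delL_wd]

theorem psi_pow_wd (q : F) (hq : q ≠ 0) (k : ℕ) (l : List Ltr) (hl : l ≠ []) :
    ((psi F q) ^ k) (wd F l) =
      (q ^ (∑ j ∈ Finset.range k, stepE (stepW^[j] l))) • wd F (stepW^[k] l) := by
  induction k generalizing l with
  | zero => simp
  | succ k ih =>
    obtain ⟨a, t, rfl⟩ : ∃ a t, l = a :: t := by
      cases l with
      | nil => exact absurd rfl hl
      | cons a t => exact ⟨a, t, rfl⟩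
    have h1 : stepW (a :: t) ≠ [] := by
      intro h
      have := congrArg List.length h
      simp at this
    rw [pow_succ, Module.End.mul_apply, psi_wd, map_smul, ih _ h1, smul_smul,
      ← zpow_add₀ hq, Finset.sum_range_succ']
    simp only [Function.iterate_succ_apply, Function.iterate_zero_apply]
    ring_nf

theorem stepW_append (u v : List Ltr) :
    stepW^[u.length] (u ++ v) = v ++ u.map sw := by
  induction u generalizing v with
  | nil => simp
  | cons a t ih =>
    have : stepW ((a :: t) ++ v) = t ++ (v ++ [sw a]) := by simp [stepW]
    rw [List.length_cons, Function.iterate_succ_apply, this, ih (v ++ [sw a])]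
    simp

theorem stepW_cycle (l : List Ltr) : stepW^[2 * l.length] l = l := by
  have h1 : stepW^[l.length] l = l.map sw := by simpa using stepW_append l []
  have h2 : stepW^[l.length] (l.map sw) = (l.map sw).map sw := by
    have := stepW_append (l.map sw) []
    simpa using this
  rw [two_mul, Function.iterate_add_apply, h1, h2]
  simp [List.map_map, Function.comp_def]

/-- potential function for the telescoping sum -/
def pf : List Ltr → ℤ
  | [] => 0
  | a :: t => ((t.map (fun y => brk a y)).sum) + pf t

theorem sum_map_neg (t : List Ltr) (g : Ltr → ℤ) :
    (t.map (fun y => - g y)).sum = - (t.map g).sum := by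
  induction t with
  | nil => simp
  | cons a t ih => simp [ih]; ring

theorem pf_append_single (t : List Ltr) (b : Ltr) :
    pf (t ++ [b]) = pf t + ((t.map (fun y => brk y b)).sum) := by
  induction t with
  | nil => simp [pf]
  | cons a t ih =>
    simp only [List.cons_append, pf, List.append_eq, List.map_append, List.sum_append,
      List.map_cons, List.sum_cons, List.map_nil, List.sum_nil, ih, brk_comm a b]
    ring

theorem two_stepE (a : Ltr) (t : List Ltr) :
    2 * stepE (a :: t) = pf (a :: t) - pf (stepW (a :: t)) - 4 := by
  have hS : (t.map (fun y => brk a y)).sum = (t.map (fun y => brk y a)).sum := by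
    congr 1
    exact List.map_congr_left (fun y _ => brk_comm a y)
  have h1 : stepE (a :: t) = (t.map (fun y => brk y a)).sum + (-2) := by
    simp [stepE, brk_sw_self a]
  have h2 : pf (stepW (a :: t)) = pf t - (t.map (fun y => brk y a)).sum := by
    have : (t.map (fun y => brk y (sw a))).sum = - (t.map (fun y => brk y a)).sum := by
      rw [← sum_map_neg t (fun y => brk y a)]
      congr 1
      exact List.map_congr_left (fun y _ => brk_sw y a)
    simp [stepW, pf_append_single, this]
    ring
  have h3 : pf (a :: t) = (t.map (fun y => brk y a)).sum + pf t := by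
    simp [pf, hS]
  rw [h1, h2, h3]; ring

theorem stepW_iter_len (l : List Ltr) (j : ℕ) : (stepW^[j] l).length = l.length := by
  induction j with
  | zero => rfl
  | succ j ih => rw [Function.iterate_succ_apply', stepW_length, ih]

theorem stepW_iter_ne_nil (l : List Ltr) (hl : l ≠ []) (j : ℕ) : stepW^[j] l ≠ [] := by
  intro h
  have h2 := stepW_iter_len l j
  rw [h] at h2
  exact hl (List.length_eq_zero_iff.mp h2.symm)

theorem stepE_sum (l : List Ltr) (hl : l ≠ []) :
    ∑ j ∈ Finset.range (2 * l.length), stepE (stepW^[j] l) = -(4 * (l.length : ℤ)) := by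
  have key : ∀ j, 2 * stepE (stepW^[j] l) =
      pf (stepW^[j] l) - pf (stepW^[j+1] l) - 4 := by
    intro j
    obtain ⟨a, t, h⟩ : ∃ a t, stepW^[j] l = a :: t := by
      cases h : stepW^[j] l with
      | nil => exact absurd h (stepW_iter_ne_nil l hl j)
      | cons a t => exact ⟨a, t, rfl⟩
    rw [Function.iterate_succ_apply', h]
    exact two_stepE a t
  have h2 : 2 * ∑ j ∈ Finset.range (2 * l.length), stepE (stepW^[j] l)
      = ∑ j ∈ Finset.range (2 * l.length), (pf (stepW^[j] l) - pf (stepW^[j+1] l) - 4) := by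
    rw [Finset.mul_sum]
    exact Finset.sum_congr rfl fun j _ => key j
  rw [show (∑ j ∈ Finset.range (2 * l.length), (pf (stepW^[j] l) - pf (stepW^[j+1] l) - 4))
      = (∑ j ∈ Finset.range (2 * l.length), (pf (stepW^[j] l) - pf (stepW^[j+1] l)))
        - (2 * l.length : ℤ) * 4 by
      rw [Finset.sum_sub_distrib, Finset.sum_const, Finset.card_range]
      ring,
    Finset.sum_range_sub' (fun j => pf (stepW^[j] l)), Function.iterate_zero_apply,
    stepW_cycle] at h2
  omega

theorem psi_pow_cycle (q : F) (hq : q ≠ 0) (l : List Ltr) :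
    ((psi F q) ^ (2 * l.length)) (wd F l) = (q ^ (4 * l.length))⁻¹ • wd F l := by
  by_cases hl : l = []
  · subst hl; simp
  · rw [psi_pow_wd q hq _ l hl, stepE_sum l hl, stepW_cycle]
    congr 1
    rw [← zpow_natCast q (4 * l.length), ← zpow_neg]
    norm_cast

/- span tools -/
theorem wd_mem_Vn (l : List Ltr) : wd F l ∈ Vn F l.length :=
  Submodule.subset_span ⟨l, rfl, rfl⟩

theorem Vn_le {n : ℕ} {P : Submodule F (FA F)}
    (h : ∀ l : List Ltr, l.length = n → wd F l ∈ P) : Vn F n ≤ P := by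
  rw [Vn, Submodule.span_le]
  rintro x ⟨l, hl, rfl⟩
  exact h l hl

theorem mem_of_word {T : FA F →ₗ[F] FA F} {n m : ℕ}
    (h : ∀ l : List Ltr, l.length = n → T (wd F l) ∈ Vn F m)
    {v : FA F} (hv : v ∈ Vn F n) : T v ∈ Vn F m :=
  Vn_le (P := (Vn F m).comap T) (fun l hl => Submodule.mem_comap.mpr (h l hl)) hv

theorem eq_of_word {T S : FA F →ₗ[F] FA F} {n : ℕ}
    (h : ∀ l : List Ltr, l.length = n → T (wd F l) = S (wd F l))
    {v : FA F} (hv : v ∈ Vn F n) : T v = S v :=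
  (Vn_le (P := LinearMap.eqLocus T S) (fun l hl => h l hl) hv : _)

/- memberships -/
theorem AL_mem {n : ℕ} {v : FA F} (hv : v ∈ Vn F n) : AL F v ∈ Vn F (n + 1) :=
  mem_of_word (fun l hl => by rw [AL_wd]; exact hl ▸ wd_mem_Vn (lA :: l)) hv
theorem BL_mem {n : ℕ} {v : FA F} (hv : v ∈ Vn F n) : BL F v ∈ Vn F (n + 1) :=
  mem_of_word (fun l hl => by rw [BL_wd]; exact hl ▸ wd_mem_Vn (lB :: l)) hv
theorem AR_mem {n : ℕ} {v : FA F} (hv : v ∈ Vn F n) : AR F v ∈ Vn F (n + 1) :=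
  mem_of_word (fun l hl => by
    rw [AR_wd]
    have := wd_mem_Vn (F := F) (l ++ [lA])
    simpa [hl] using this) hv
theorem BR_mem {n : ℕ} {v : FA F} (hv : v ∈ Vn F n) : BR F v ∈ Vn F (n + 1) :=
  mem_of_word (fun l hl => by
    rw [BR_wd]
    have := wd_mem_Vn (F := F) (l ++ [lB])
    simpa [hl] using this) hv
theorem Kop_mem {q : F} {n : ℕ} {v : FA F} (hv : v ∈ Vn F n) : Kop F q v ∈ Vn F n :=
  mem_of_word (fun l hl => by
    rw [Kop_wd]
    exact Submodule.smul_mem _ _ (hl ▸ wd_mem_Vn l)) hv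
theorem Kinv_mem {q : F} {n : ℕ} {v : FA F} (hv : v ∈ Vn F n) : Kinv F q v ∈ Vn F n :=
  mem_of_word (fun l hl => by
    rw [Kinv_wd]
    exact Submodule.smul_mem _ _ (hl ▸ wd_mem_Vn l)) hv

theorem delL_mem {x : Ltr} {n : ℕ} {v : FA F} (hv : v ∈ Vn F (n + 1)) :
    delL F x v ∈ Vn F n :=
  mem_of_word (fun l hl => by
    rw [delL_wd]
    split
    · cases l with
      | nil => simp at hl
      | cons a t =>
        simp only [List.tail_cons]
        exact (by simpa using hl : t.length = n) ▸ wd_mem_Vn t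
    · exact Submodule.zero_mem _) hv

theorem psi_mem {q : F} {n : ℕ} {v : FA F} (hv : v ∈ Vn F n) : psi F q v ∈ Vn F n :=
  mem_of_word (fun l hl => by
    cases l with
    | nil => rw [psi_wd_nil]; exact Submodule.zero_mem _
    | cons a t =>
      rw [psi_wd]
      refine Submodule.smul_mem _ _ ?_
      have := wd_mem_Vn (F := F) (stepW (a :: t))
      rwa [stepW_length, hl] at this) hv

theorem psi_pow_mem {q : F} {k : ℕ} {n : ℕ} {v : FA F} (hv : v ∈ Vn F n) :
    ((psi F q) ^ k) v ∈ Vn F n := by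
  induction k generalizing v with
  | zero => simpa using hv
  | succ k ih =>
    rw [pow_succ, Module.End.mul_apply]
    exact ih (psi_mem hv)

theorem psi_pow_cycle_mem {q : F} (hq : q ≠ 0) {n : ℕ} {v : FA F} (hv : v ∈ Vn F n) :
    ((psi F q) ^ (2 * n)) v = (q ^ (4 * n))⁻¹ • v := by
  refine eq_of_word (T := (psi F q) ^ (2 * n))
    (S := (q ^ (4 * n))⁻¹ • (LinearMap.id : FA F →ₗ[F] FA F)) (fun l hl => ?_) hv
  rw [LinearMap.smul_apply, LinearMap.id_apply, ← hl]
  exact psi_pow_cycle q hq l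

/- operator identities -/
theorem delL_AL (v : FA F) : delL F lA (AL F v) = v := by
  refine LinearMap.congr_fun (lmap_ext (f := delL F lA ∘ₗ AL F) (g := LinearMap.id)
    (fun l => ?_)) v
  simp [AL_wd, delL_wd]
theorem delL_BL (v : FA F) : delL F lB (BL F v) = v := by
  refine LinearMap.congr_fun (lmap_ext (f := delL F lB ∘ₗ BL F) (g := LinearMap.id)
    (fun l => ?_)) v
  simp [BL_wd, delL_wd]
theorem delL_lB_AL (v : FA F) : delL F lB (AL F v) = 0 := by
  refine LinearMap.congr_fun (lmap_ext (f := delL F lB ∘ₗ AL F) (g := 0) (fun l => ?_)) v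
  simp [AL_wd, delL_wd]
theorem delL_lA_BL (v : FA F) : delL F lA (BL F v) = 0 := by
  refine LinearMap.congr_fun (lmap_ext (f := delL F lA ∘ₗ BL F) (g := 0) (fun l => ?_)) v
  simp [BL_wd, delL_wd]

theorem psi_AL (q : F) (v : FA F) : psi F q (AL F v) = Kop F q (BR F v) := by
  simp [psi, delL_AL, delL_lB_AL]
theorem psi_BL (q : F) (v : FA F) : psi F q (BL F v) = Kinv F q (AR F v) := by
  simp [psi, delL_BL, delL_lA_BL]

theorem hatA_apply (q : F) (v : FA F) :
    hatOp F q lA v = (1 - q ^ 2) • (AL F v - psi F q (AL F v)) := by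
  rw [hatOp, if_pos rfl, psi_AL]
  simp
theorem hatB_apply (q : F) (v : FA F) :
    hatOp F q lB v = (1 - q ^ 2) • (BL F v - psi F q (BL F v)) := by
  rw [hatOp, if_neg (by decide), psi_BL]
  simp

theorem decomp {n : ℕ} {v : FA F} (hv : v ∈ Vn F (n + 1)) :
    AL F (delL F lA v) + BL F (delL F lB v) = v := by
  refine eq_of_word (T := AL F ∘ₗ delL F lA + BL F ∘ₗ delL F lB)
    (S := LinearMap.id) (fun l hl => ?_) hv
  cases l with
  | nil => simp at hl
  | cons a t =>
    rcases ltr_cases a with rfl | rfl <;>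
      simp [delL_wd, AL_wd, BL_wd]

/- the inverse of Q(1-ψ) on Vₙ -/
def Rop (q : F) (n : ℕ) : FA F →ₗ[F] FA F :=
  ((1 - q ^ 2)⁻¹ * (1 - (q ^ (4 * n))⁻¹)⁻¹) • (∑ k ∈ Finset.range (2 * n), (psi F q) ^ k)

theorem Rop_mem {q : F} {n : ℕ} {v : FA F} (hv : v ∈ Vn F n) : Rop q n v ∈ Vn F n := by
  rw [Rop, LinearMap.smul_apply, LinearMap.sum_apply]
  exact Submodule.smul_mem _ _ (Submodule.sum_mem _ fun k _ => psi_pow_mem hv)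

section RopInv

variable {q : F}

theorem Qne (hq1 : ∀ k : ℕ, 0 < k → q ^ k ≠ 1) : (1 : F) - q ^ 2 ≠ 0 := by
  intro h
  exact hq1 2 (by norm_num) (sub_eq_zero.mp h).symm

theorem cne (hq1 : ∀ k : ℕ, 0 < k → q ^ k ≠ 1) {n : ℕ} (hn : n ≠ 0) :
    (1 : F) - (q ^ (4 * n))⁻¹ ≠ 0 := by
  intro h
  have h1 : (q ^ (4 * n))⁻¹ = 1 := (sub_eq_zero.mp h).symm
  exact hq1 (4 * n) (by omega) (inv_eq_one.mp h1)

theorem geom1 (hq : q ≠ 0) {n : ℕ} {v : FA F} (hv : v ∈ Vn F n) :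
    (∑ k ∈ Finset.range (2 * n), (psi F q) ^ k) (v - psi F q v)
      = (1 - (q ^ (4 * n))⁻¹) • v := by
  rw [LinearMap.sum_apply]
  have : ∀ k, ((psi F q) ^ k) (v - psi F q v)
      = ((psi F q) ^ k) v - ((psi F q) ^ (k + 1)) v := by
    intro k
    rw [map_sub, pow_succ, Module.End.mul_apply]
  rw [Finset.sum_congr rfl (fun k _ => this k),
    Finset.sum_range_sub' (fun k => ((psi F q) ^ k) v), pow_zero,
    Module.End.one_apply, psi_pow_cycle_mem hq hv, sub_smul, one_smul]

theorem geom2 (hq : q ≠ 0) {n : ℕ} {v : FA F} (hv : v ∈ Vn F n) :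
    (∑ k ∈ Finset.range (2 * n), (psi F q) ^ k) v
        - psi F q ((∑ k ∈ Finset.range (2 * n), (psi F q) ^ k) v)
      = (1 - (q ^ (4 * n))⁻¹) • v := by
  rw [LinearMap.sum_apply, map_sum, ← Finset.sum_sub_distrib]
  have : ∀ k, ((psi F q) ^ k) v - psi F q (((psi F q) ^ k) v)
      = ((psi F q) ^ k) v - ((psi F q) ^ (k + 1)) v := by
    intro k
    rw [pow_succ', Module.End.mul_apply]
  rw [Finset.sum_congr rfl (fun k _ => this k),
    Finset.sum_range_sub' (fun k => ((psi F q) ^ k) v), pow_zero,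
    Module.End.one_apply, psi_pow_cycle_mem hq hv, sub_smul, one_smul]

theorem Rop_inv1 (hq : q ≠ 0) (hq1 : ∀ k : ℕ, 0 < k → q ^ k ≠ 1)
    {n : ℕ} (hn : n ≠ 0) {v : FA F} (hv : v ∈ Vn F n) :
    (1 - q ^ 2) • (Rop q n v - psi F q (Rop q n v)) = v := by
  have hQ : (1 : F) - q ^ 2 ≠ 0 := Qne hq1
  have hd : (1 : F) - (q ^ (4 * n))⁻¹ ≠ 0 := cne hq1 hn
  rw [Rop, LinearMap.smul_apply, map_smul, ← smul_sub, smul_smul, geom2 hq hv, smul_smul]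
  rw [show (1 - q ^ 2) * ((1 - q ^ 2)⁻¹ * (1 - (q ^ (4 * n))⁻¹)⁻¹) * (1 - (q ^ (4 * n))⁻¹)
      = ((1 - q ^ 2) * (1 - q ^ 2)⁻¹) * ((1 - (q ^ (4 * n))⁻¹)⁻¹ * (1 - (q ^ (4 * n))⁻¹))
      from by ring, mul_inv_cancel₀ hQ, inv_mul_cancel₀ hd, one_mul, one_smul]

theorem Rop_inv2 (hq : q ≠ 0) (hq1 : ∀ k : ℕ, 0 < k → q ^ k ≠ 1)
    {n : ℕ} (hn : n ≠ 0) {v : FA F} (hv : v ∈ Vn F n) :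
    Rop q n ((1 - q ^ 2) • (v - psi F q v)) = v := by
  have hQ : (1 : F) - q ^ 2 ≠ 0 := Qne hq1
  have hd : (1 : F) - (q ^ (4 * n))⁻¹ ≠ 0 := cne hq1 hn
  rw [Rop, LinearMap.smul_apply, map_smul, geom1 hq hv, smul_smul, smul_smul]
  rw [show (1 - q ^ 2)⁻¹ * (1 - (q ^ (4 * n))⁻¹)⁻¹ * (1 - q ^ 2) * (1 - (q ^ (4 * n))⁻¹)
      = ((1 - q ^ 2)⁻¹ * (1 - q ^ 2)) * ((1 - (q ^ (4 * n))⁻¹)⁻¹ * (1 - (q ^ (4 * n))⁻¹))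
      from by ring, inv_mul_cancel₀ hQ, inv_mul_cancel₀ hd, one_mul, one_smul]

end RopInv

/- the inverse map χ -/
def chiN (q : F) : ℕ → (FA F →ₗ[F] FA F)
  | 0 => LinearMap.id
  | n + 1 =>
      (AL F ∘ₗ chiN q n ∘ₗ delL F lA + BL F ∘ₗ chiN q n ∘ₗ delL F lB) ∘ₗ Rop q (n + 1)

theorem chiN_succ_apply (q : F) (n : ℕ) (v : FA F) :
    chiN q (n + 1) v = AL F (chiN q n (delL F lA (Rop q (n + 1) v)))
      + BL F (chiN q n (delL F lB (Rop q (n + 1) v))) := by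
  simp [chiN]

theorem phiW_mem (q : F) (l : List Ltr) : phiW F q l ∈ Vn F l.length := by
  induction l with
  | nil =>
    have h1 : phiW F q [] = wd F [] := by
      rw [phiW, wd]
      rfl
    rw [h1]
    exact wd_mem_Vn []
  | cons a t ih =>
    have h1 : phiW F q (a :: t) = hatOp F q a (phiW F q t) := by rw [phiW]
    rw [h1, List.length_cons]
    rcases ltr_cases a with rfl | rfl
    · rw [hatA_apply]
      exact Submodule.smul_mem _ _ (Submodule.sub_mem _ (AL_mem ih) (psi_mem (AL_mem ih)))
    · rw [hatB_apply]
      exact Submodule.smul_mem _ _ (Submodule.sub_mem _ (BL_mem ih) (psi_mem (BL_mem ih)))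

theorem phi_mem {q : F} {n : ℕ} {v : FA F} (hv : v ∈ Vn F n) : phi F q v ∈ Vn F n :=
  mem_of_word (fun l hl => by rw [phi_wd]; exact hl ▸ phiW_mem q l) hv

theorem chiN_mem {q : F} {n : ℕ} {v : FA F} (hv : v ∈ Vn F n) : chiN q n v ∈ Vn F n := by
  induction n generalizing v with
  | zero => simpa [chiN] using hv
  | succ n ih =>
    rw [chiN_succ_apply]
    exact Submodule.add_mem _ (AL_mem (ih (delL_mem (Rop_mem hv))))
      (BL_mem (ih (delL_mem (Rop_mem hv))))

theorem phi_AL (q : F) (v : FA F) : phi F q (AL F v) = hatOp F q lA (phi F q v) := by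
  refine LinearMap.congr_fun (lmap_ext (f := phi F q ∘ₗ AL F)
    (g := hatOp F q lA ∘ₗ phi F q) (fun l => ?_)) v
  simp only [LinearMap.comp_apply, AL_wd, phi_wd]
  rw [phiW]

theorem phi_BL (q : F) (v : FA F) : phi F q (BL F v) = hatOp F q lB (phi F q v) := by
  refine LinearMap.congr_fun (lmap_ext (f := phi F q ∘ₗ BL F)
    (g := hatOp F q lB ∘ₗ phi F q) (fun l => ?_)) v
  simp only [LinearMap.comp_apply, BL_wd, phi_wd]
  rw [phiW]

theorem hat_combine (q : F) (a b : FA F) :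
    hatOp F q lA a + hatOp F q lB b
      = (1 - q ^ 2) • ((AL F a + BL F b) - psi F q (AL F a + BL F b)) := by
  rw [hatA_apply, hatB_apply, map_add, ← smul_add]
  congr 1
  abel

theorem phi_V0 {q : F} {v : FA F} (hv : v ∈ Vn F 0) : phi F q v = v := by
  refine eq_of_word (T := phi F q) (S := LinearMap.id) (fun l hl => ?_) hv
  rw [List.length_eq_zero_iff] at hl
  subst hl
  rw [LinearMap.id_apply, phi_wd]
  rw [phiW, wd]
  rfl

section Main

variable {q : F} (hq : q ≠ 0) (hq1 : ∀ k : ℕ, 0 < k → q ^ k ≠ 1)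

include hq hq1 in
theorem T1 : ∀ n : ℕ, ∀ v ∈ Vn F n, phi F q (chiN q n v) = v := by
  intro n
  induction n with
  | zero => intro v hv; simpa [chiN] using phi_V0 hv
  | succ n ih =>
    intro v hv
    have hx : Rop q (n + 1) v ∈ Vn F (n + 1) := Rop_mem hv
    have ha : delL F lA (Rop q (n + 1) v) ∈ Vn F n := delL_mem hx
    have hb : delL F lB (Rop q (n + 1) v) ∈ Vn F n := delL_mem hx
    rw [chiN_succ_apply, map_add, phi_AL, phi_BL, ih _ ha, ih _ hb, hat_combine,
      decomp hx]
    exact Rop_inv1 hq hq1 (Nat.succ_ne_zero n) hv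

include hq hq1 in
theorem T2 : ∀ n : ℕ, ∀ u ∈ Vn F n, chiN q n (phi F q u) = u := by
  intro n
  induction n with
  | zero => intro u hu; simpa [chiN] using phi_V0 hu
  | succ n ih =>
    intro u hu
    have ha : delL F lA u ∈ Vn F n := delL_mem hu
    have hb : delL F lB u ∈ Vn F n := delL_mem hu
    have hphia : phi F q (delL F lA u) ∈ Vn F n := phi_mem ha
    have hphib : phi F q (delL F lB u) ∈ Vn F n := phi_mem hb
    set w := AL F (phi F q (delL F lA u)) + BL F (phi F q (delL F lB u)) with hw
    have hwmem : w ∈ Vn F (n + 1) := Submodule.add_mem _ (AL_mem hphia) (BL_mem hphib)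
    have hphi : phi F q u = (1 - q ^ 2) • (w - psi F q w) := by
      conv_lhs => rw [← decomp hu]
      rw [map_add, phi_AL, phi_BL, hat_combine]
    have hr : Rop q (n + 1) (phi F q u) = w := by
      rw [hphi]
      exact Rop_inv2 hq hq1 (Nat.succ_ne_zero n) hwmem
    rw [chiN_succ_apply, hr]
    simp only [hw, map_add, delL_AL, delL_BL, delL_lB_AL, delL_lA_BL, add_zero, zero_add,
      map_zero]
    rw [ih _ ha, ih _ hb]
    exact decomp hu

end Main

def chi (q : F) : FA F →ₗ[F] FA F := mkMap F fun l => chiN q l.length (wd F l)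

theorem chi_wd (q : F) (l : List Ltr) : chi q (wd F l) = chiN q l.length (wd F l) :=
  mkMap_wd _ l

theorem chi_eq_chiN {q : F} {n : ℕ} {v : FA F} (hv : v ∈ Vn F n) :
    chi q v = chiN q n v := by
  refine eq_of_word (T := chi q) (S := chiN q n) (fun l hl => ?_) hv
  rw [chi_wd, hl]

end PhiBijectiveProof

end SqPaper
open SqPaper in
/-- `φ(V_n) = V_n` for all `n`, and consequently `φ` is a bijection. -/
theorem phi_bijective (F : Type*) [Field F] (q : F) (hq : q ≠ 0)
    (hq1 : ∀ k : ℕ, 0 < k → q ^ k ≠ 1) :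
    (∀ n : ℕ, Submodule.map (phi F q) (Vn F n) = Vn F n) ∧
      Function.Bijective (phi F q) := by
  have hL : chi q ∘ₗ phi F q = LinearMap.id := by
    apply lmap_ext
    intro l
    rw [LinearMap.comp_apply, LinearMap.id_apply,
      chi_eq_chiN (phi_mem (wd_mem_Vn l)), T2 hq hq1 l.length (wd F l) (wd_mem_Vn l)]
  have hR : phi F q ∘ₗ chi q = LinearMap.id := by
    apply lmap_ext
    intro l
    rw [LinearMap.comp_apply, LinearMap.id_apply, chi_wd,
      T1 hq hq1 l.length (wd F l) (wd_mem_Vn l)]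
  constructor
  · intro n
    refine le_antisymm ?_ (Vn_le fun l hl => Submodule.mem_map.mpr
      ⟨chiN q n (wd F l), chiN_mem (hl ▸ wd_mem_Vn l),
        T1 hq hq1 n (wd F l) (hl ▸ wd_mem_Vn l)⟩)
    rw [Submodule.map_le_iff_le_comap]
    exact Vn_le fun l hl => Submodule.mem_comap.mpr (phi_mem (hl ▸ wd_mem_Vn l))
  · exact Function.bijective_iff_has_inverse.mpr
      ⟨chi q, fun v => LinearMap.congr_fun hL v, fun v => LinearMap.congr_fun hR v⟩
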